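/- arXiv:2207.11785 — 4 statements merged into one kernel-verified Lean document; each statement's English description precedes it below -/
import Mathlib

section
/- The inverse propensity weighted (IPW) ranking loss is an unbiased estimator of the ideal ranking loss when propensities are correctly estimated: if for every document d the estimated examination probability equals the true examination probability, then the expectation over examination indicators of the IPW loss equals the ideal loss, i.e., E[∑_{d : c_d = 1} Δ(d)/p̂_d] = ∑_{d : r_d = 1} Δ(d). -/
open MeasureTheory ProbabilityTheory Finset

/-- The IPW ranking loss is an unbiased estimator of the ideal ranking
loss when propensities are correctly estimated. -/
theorem ipw_unbiased {Ω : Type*} [MeasureSpace Ω] [IsProbabilityMeasure (ℙ : Measure Ω)]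
    {D : Type*} [Fintype D]
    (r : D → ℝ) (hr : ∀ d, r d = 0 ∨ r d = 1)
    (p phat : D → ℝ)
    (hp : ∀ d, 0 < p d ∧ p d ≤ 1) (hphat : ∀ d, 0 < phat d ∧ phat d ≤ 1)
    (e : D → Ω → ℝ) (he01 : ∀ d ω, e d ω = 0 ∨ e d ω = 1)
    (heInt : ∀ d, Integrable (e d)) (heE : ∀ d, ∫ ω, e d ω = p d)
    (Δ : D → ℝ)
    (hacc : ∀ d, phat d = p d) :
    ∫ ω, ∑ d, (e d ω * r d) * Δ d / phat d
      = ∑ d ∈ Finset.univ.filter (fun d => r d = 1), Δ d := by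
  have key : ∀ ω, ∑ d, (e d ω * r d) * Δ d / phat d
      = ∑ d, e d ω * (r d * Δ d / phat d) := by
    intro ω; apply Finset.sum_congr rfl; intro d _; ring
  simp only [key]
  rw [integral_finset_sum _ (fun d _ => (heInt d).mul_const _)]
  have : ∀ d, ∫ ω, e d ω * (r d * Δ d / phat d) = r d * Δ d := by
    intro d
    rw [integral_mul_const, heE, hacc]
    have hpd := (hp d).1
    field_simp
  simp only [this]
  rw [Finset.sum_filter]
  apply Finset.sum_congr rfl
  intro d _
  rcases hr d with h | h <;> simp [h]
end

section
/- The doubly robust estimator is unbiased if the imputed errors are accurate: if for every ranked list π and every document d in π the error deviation δ_{π,d} = c_{π,d}Δ(c,π,d) − ĉ_{π,d}Δ(ĉ,π,d) equals zero, then E[ℓ_DR] equals the ideal loss (1/|Π|)∑_{π ∈ Π} ∑_{d : c_{π,d}=1} Δ(c,π,d). -/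
open MeasureTheory ProbabilityTheory Finset

/-- The doubly robust estimator is unbiased if the imputed errors
are accurate (δ_{π,d} = 0 for all π, d). -/
theorem dr_unbiased_accurate_imputation
    {Ω : Type*} [MeasureSpace Ω] [IsProbabilityMeasure (ℙ : Measure Ω)]
    {P : Type*} [Fintype P] [Nonempty P] {D : Type*}
    (Dset : P → Finset D)
    (c chat : P → D → ℝ)
    (hc : ∀ π d, c π d = 0 ∨ c π d = 1) (hchat : ∀ π d, chat π d = 0 ∨ chat π d = 1)
    (Δc Δchat : P → D → ℝ)
    (p phat : P → D → ℝ)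
    (hp : ∀ π d, 0 < p π d ∧ p π d ≤ 1) (hphat : ∀ π d, 0 < phat π d ∧ phat π d ≤ 1)
    (o : P → Ω → ℝ) (ho01 : ∀ π ω, o π ω = 0 ∨ o π ω = 1)
    (hoInt : ∀ π, Integrable (o π))
    (hoE : ∀ π, ∀ d ∈ Dset π,
      ∫ ω, o π ω * ((c π d * Δc π d - chat π d * Δchat π d) / phat π d)
        = p π d * ((c π d * Δc π d - chat π d * Δchat π d) / phat π d))
    (hδ : ∀ π, ∀ d ∈ Dset π, c π d * Δc π d - chat π d * Δchat π d = 0) :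
    ∫ ω, (1 / (Fintype.card P : ℝ)) *
        ∑ π, ((∑ d ∈ Dset π, chat π d * Δchat π d)
          + o π ω * ∑ d ∈ Dset π,
              (c π d * Δc π d - chat π d * Δchat π d) / phat π d)
      = (1 / (Fintype.card P : ℝ)) *
          ∑ π, ∑ d ∈ (Dset π).filter (fun d => c π d = 1), Δc π d := by
  have key : ∀ ω : Ω, (1 / (Fintype.card P : ℝ)) *
        ∑ π, ((∑ d ∈ Dset π, chat π d * Δchat π d)
          + o π ω * ∑ d ∈ Dset π,
              (c π d * Δc π d - chat π d * Δchat π d) / phat π d)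
      = (1 / (Fintype.card P : ℝ)) *
          ∑ π, ∑ d ∈ (Dset π).filter (fun d => c π d = 1), Δc π d := by
    intro ω
    congr 1
    refine Finset.sum_congr rfl fun π _ => ?_
    have h1 : ∑ d ∈ Dset π, (c π d * Δc π d - chat π d * Δchat π d) / phat π d = 0 := by
      refine Finset.sum_eq_zero fun d hd => ?_
      rw [hδ π d hd, zero_div]
    rw [h1, mul_zero, add_zero]
    have h2 : ∀ d ∈ Dset π, chat π d * Δchat π d = c π d * Δc π d := fun d hd => by
      have := hδ π d hd; linarith
    rw [Finset.sum_congr rfl h2, ← Finset.sum_filter_add_sum_filter_not (Dset π) (fun d => c π d = 1)]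
    have h3 : ∑ d ∈ (Dset π).filter (fun d => ¬ c π d = 1), c π d * Δc π d = 0 := by
      refine Finset.sum_eq_zero fun d hd => ?_
      rcases hc π d with h | h
      · rw [h, zero_mul]
      · exact absurd h (Finset.mem_filter.mp hd).2
    rw [h3, add_zero]
    refine Finset.sum_congr rfl fun d hd => ?_
    rw [(Finset.mem_filter.mp hd).2, one_mul]
  calc ∫ ω, (1 / (Fintype.card P : ℝ)) *
        ∑ π, ((∑ d ∈ Dset π, chat π d * Δchat π d)
          + o π ω * ∑ d ∈ Dset π,
              (c π d * Δc π d - chat π d * Δchat π d) / phat π d)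
      = ∫ _ω : Ω, (1 / (Fintype.card P : ℝ)) *
          ∑ π, ∑ d ∈ (Dset π).filter (fun d => c π d = 1), Δc π d := by
        exact integral_congr_ae (Filter.Eventually.of_forall key)
    _ = (1 / (Fintype.card P : ℝ)) *
          ∑ π, ∑ d ∈ (Dset π).filter (fun d => c π d = 1), Δc π d := by
        simp [integral_const]
end

section
/- The doubly robust estimator is unbiased if the propensity estimates are accurate: if for every ranked list π and document d in π we have p̂_{π,d} = p_{π,d} (equivalently, the propensity deviation ρ_{π,d} = (p_{π,d} − p̂_{π,d})/p̂_{π,d} is zero), then E[ℓ_DR] equals the ideal loss (1/|Π|)∑_{π ∈ Π} ∑_{d : c_{π,d}=1} Δ(c,π,d). -/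
open MeasureTheory ProbabilityTheory Finset

/-- The doubly robust estimator is unbiased if the propensity
estimates are accurate (p̂_{π,d} = p_{π,d} for all π, d). -/
theorem dr_unbiased_accurate_propensity
    {Ω : Type*} [MeasureSpace Ω] [IsProbabilityMeasure (ℙ : Measure Ω)]
    {P : Type*} [Fintype P] [Nonempty P] {D : Type*}
    (Dset : P → Finset D)
    (c chat : P → D → ℝ)
    (hc : ∀ π d, c π d = 0 ∨ c π d = 1) (hchat : ∀ π d, chat π d = 0 ∨ chat π d = 1)
    (Δc Δchat : P → D → ℝ)
    (p phat : P → D → ℝ)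
    (hp : ∀ π d, 0 < p π d ∧ p π d ≤ 1) (hphat : ∀ π d, 0 < phat π d ∧ phat π d ≤ 1)
    (o : P → Ω → ℝ) (ho01 : ∀ π ω, o π ω = 0 ∨ o π ω = 1)
    (hoInt : ∀ π, Integrable (o π))
    (hoE : ∀ π, ∀ d ∈ Dset π,
      ∫ ω, o π ω * ((c π d * Δc π d - chat π d * Δchat π d) / phat π d)
        = p π d * ((c π d * Δc π d - chat π d * Δchat π d) / phat π d))
    (hacc : ∀ π, ∀ d ∈ Dset π, phat π d = p π d) :
    ∫ ω, (1 / (Fintype.card P : ℝ)) *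
        ∑ π, ((∑ d ∈ Dset π, chat π d * Δchat π d)
          + o π ω * ∑ d ∈ Dset π,
              (c π d * Δc π d - chat π d * Δchat π d) / phat π d)
      = (1 / (Fintype.card P : ℝ)) *
          ∑ π, ∑ d ∈ (Dset π).filter (fun d => c π d = 1), Δc π d := by
  have key : ∀ π : P, ∫ ω, ((∑ d ∈ Dset π, chat π d * Δchat π d)
      + o π ω * ∑ d ∈ Dset π, (c π d * Δc π d - chat π d * Δchat π d) / phat π d)
      = ∑ d ∈ (Dset π).filter (fun d => c π d = 1), Δc π d := by
    intro π
    have hint : Integrable (fun ω => o π ω *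
        ∑ d ∈ Dset π, (c π d * Δc π d - chat π d * Δchat π d) / phat π d) :=
      (hoInt π).mul_const _
    rw [integral_add (integrable_const _) hint, integral_const, probReal_univ]
    have h2 : ∫ ω, o π ω * ∑ d ∈ Dset π,
        (c π d * Δc π d - chat π d * Δchat π d) / phat π d
        = ∑ d ∈ Dset π, p π d * ((c π d * Δc π d - chat π d * Δchat π d) / phat π d) := by
      have : (fun ω => o π ω * ∑ d ∈ Dset π,
          (c π d * Δc π d - chat π d * Δchat π d) / phat π d)
          = fun ω => ∑ d ∈ Dset π,
            o π ω * ((c π d * Δc π d - chat π d * Δchat π d) / phat π d) := by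
        funext ω; rw [Finset.mul_sum]
      rw [this, integral_finset_sum _ (fun d _ => (hoInt π).mul_const _)]
      exact Finset.sum_congr rfl (fun d hd => hoE π d hd)
    rw [h2]
    have h3 : ∀ d ∈ Dset π,
        p π d * ((c π d * Δc π d - chat π d * Δchat π d) / phat π d)
        = c π d * Δc π d - chat π d * Δchat π d := by
      intro d hd
      rw [hacc π d hd, mul_comm, div_mul_cancel₀ _ (hp π d).1.ne']
    rw [Finset.sum_congr rfl h3]
    have h4 : (∑ d ∈ Dset π, chat π d * Δchat π d)
        + ∑ d ∈ Dset π, (c π d * Δc π d - chat π d * Δchat π d)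
        = ∑ d ∈ Dset π, c π d * Δc π d := by
      rw [← Finset.sum_add_distrib]; apply Finset.sum_congr rfl; intro d _; ring
    simp only [ENNReal.toReal_one, smul_eq_mul, one_mul]
    rw [h4]
    rw [Finset.sum_filter]
    apply Finset.sum_congr rfl
    intro d _
    rcases hc π d with h | h <;> simp [h]
  rw [integral_const_mul]
  congr 1
  have htot := integral_finset_sum (μ := ℙ) Finset.univ
    (f := fun π ω => (∑ d ∈ Dset π, chat π d * Δchat π d)
      + o π ω * ∑ d ∈ Dset π, (c π d * Δc π d - chat π d * Δchat π d) / phat π d)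
    (fun π _ => (integrable_const _).add ((hoInt π).mul_const _))
  rw [htot]
  exact Finset.sum_congr rfl (fun π _ => key π)
end

section
/- The bias of the doubly robust estimator equals |(1/|Π|) ∑_{π ∈ Π} ∑_{d ∈ π} ρ_{π,d} · δ_{π,d}|, where ρ_{π,d} = (p_{π,d} − p̂_{π,d})/p̂_{π,d} is the propensity deviation and δ_{π,d} = c_{π,d}Δ(c,π,d) − ĉ_{π,d}Δ(ĉ,π,d) is the error deviation; the bias is |E[ℓ_DR] − ℓ_ideal| with ℓ_ideal = (1/|Π|)∑_{π∈Π}∑_{d∈π} c_{π,d}Δ(c,π,d). -/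
open MeasureTheory ProbabilityTheory Finset

/-- The bias of the doubly robust estimator equals
|(1/|Π|) ∑_{π ∈ Π} ∑_{d ∈ π} ρ_{π,d} · δ_{π,d}|. -/
theorem dr_bias
    {Ω : Type*} [MeasureSpace Ω] [IsProbabilityMeasure (ℙ : Measure Ω)]
    {P : Type*} [Fintype P] [Nonempty P] {D : Type*}
    (Dset : P → Finset D)
    (c chat : P → D → ℝ)
    (hc : ∀ π d, c π d = 0 ∨ c π d = 1) (hchat : ∀ π d, chat π d = 0 ∨ chat π d = 1)
    (Δc Δchat : P → D → ℝ)
    (p phat : P → D → ℝ)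
    (hp : ∀ π d, 0 < p π d ∧ p π d ≤ 1) (hphat : ∀ π d, 0 < phat π d ∧ phat π d ≤ 1)
    (o : P → Ω → ℝ) (ho01 : ∀ π ω, o π ω = 0 ∨ o π ω = 1)
    (hoInt : ∀ π, Integrable (o π))
    (hoE : ∀ π, ∀ d ∈ Dset π,
      ∫ ω, o π ω * ((c π d * Δc π d - chat π d * Δchat π d) / phat π d)
        = p π d * ((c π d * Δc π d - chat π d * Δchat π d) / phat π d)) :
    |(∫ ω, (1 / (Fintype.card P : ℝ)) *
        ∑ π, ((∑ d ∈ Dset π, chat π d * Δchat π d)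
          + o π ω * ∑ d ∈ Dset π,
              (c π d * Δc π d - chat π d * Δchat π d) / phat π d))
      - (1 / (Fintype.card P : ℝ)) * ∑ π, ∑ d ∈ Dset π, c π d * Δc π d|
    = |(1 / (Fintype.card P : ℝ)) * ∑ π, ∑ d ∈ Dset π,
        (p π d - phat π d) / phat π d
          * (c π d * Δc π d - chat π d * Δchat π d)| := by

  set C := (1 / (Fintype.card P : ℝ)) with hC
  have key : ∀ π : P, (∫ ω, o π ω) * (∑ d ∈ Dset π,
      (c π d * Δc π d - chat π d * Δchat π d) / phat π d)
      = ∑ d ∈ Dset π, p π d * ((c π d * Δc π d - chat π d * Δchat π d) / phat π d) := by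
    intro π
    rw [Finset.mul_sum]
    refine Finset.sum_congr rfl fun d hd => ?_
    rw [← hoE π d hd, integral_mul_const]
  have hInt : ∀ π : P, Integrable (fun ω => (∑ d ∈ Dset π, chat π d * Δchat π d)
      + o π ω * ∑ d ∈ Dset π, (c π d * Δc π d - chat π d * Δchat π d) / phat π d) := by
    intro π
    exact (integrable_const _).add ((hoInt π).mul_const _)
  have hint2 : (∫ ω, C * ∑ π, ((∑ d ∈ Dset π, chat π d * Δchat π d)
          + o π ω * ∑ d ∈ Dset π,
              (c π d * Δc π d - chat π d * Δchat π d) / phat π d))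
      = C * ∑ π, ((∑ d ∈ Dset π, chat π d * Δchat π d)
          + ∑ d ∈ Dset π, p π d * ((c π d * Δc π d - chat π d * Δchat π d) / phat π d)) := by
    rw [integral_const_mul, integral_finset_sum _ (fun π _ => hInt π)]
    congr 1
    refine Finset.sum_congr rfl fun π _ => ?_
    rw [integral_add (integrable_const _) ((hoInt π).mul_const _),
      integral_const, probReal_univ, smul_eq_mul, one_mul,
      integral_mul_const, key]
  rw [hint2, ← mul_sub, ← Finset.sum_sub_distrib]
  congr 2
  refine Finset.sum_congr rfl fun π _ => ?_
  rw [← Finset.sum_add_distrib, ← Finset.sum_sub_distrib]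
  refine Finset.sum_congr rfl fun d hd => ?_
  have hne : phat π d ≠ 0 := ne_of_gt (hphat π d).1
  field_simp
  ring
end
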